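/- For every unit vector ν ∈ ℝ^n and every R > 0, the closed half-space H = {x ∈ ℝ^n : x·ν ≥ 0} is K-outward minimizing in the open ball B(0,R): Per_K(H,B(0,R)) ≤ Per_K(F,B(0,R)) for every measurable F ⊇ H with F∖H compactly contained in B(0,R). -/

import Mathlib

open MeasureTheory Set Filter Metric Topology
open scoped ENNReal Pointwise

noncomputable section

abbrev Euc (n : ℕ) := EuclideanSpace ℝ (Fin n)

/-- Admissible kernel: measurable, nonnegative and even away from the origin,
with `∫ min(1,|x|) K(x) dx < ∞`. -/
def KernelOK {n : ℕ} (K : Euc n → ℝ) : Prop :=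
  Measurable K ∧ (∀ x : Euc n, x ≠ 0 → 0 ≤ K x) ∧ (∀ x : Euc n, x ≠ 0 → K (-x) = K x) ∧
    (∫⁻ x : Euc n, ENNReal.ofReal (min 1 ‖x‖ * K x)) < ⊤

/-- The `K`-perimeter of `E` in `Ω`. -/
def perK {n : ℕ} (K : Euc n → ℝ) (E Ω : Set (Euc n)) : ℝ≥0∞ :=
  (∫⁻ x in E, ∫⁻ y in Ω \ E, ENNReal.ofReal (K (x - y))) +
  (∫⁻ x in E ∩ Ω, ∫⁻ y in (Ω ∪ E)ᶜ, ENNReal.ofReal (K (x - y)))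

/-- The (total) `K`-perimeter of `E`. -/
def perKtot {n : ℕ} (K : Euc n → ℝ) (E : Set (Euc n)) : ℝ≥0∞ :=
  ∫⁻ x in E, ∫⁻ y in Eᶜ, ENNReal.ofReal (K (x - y))

/-- `A` is compactly contained in `Ω`. -/
def CptIn {n : ℕ} (A Ω : Set (Euc n)) : Prop :=
  IsCompact (closure A) ∧ closure A ⊆ Ω

/-- `E` is `K`-outward minimizing in `Ω`. -/
def OutMin {n : ℕ} (K : Euc n → ℝ) (E Ω : Set (Euc n)) : Prop :=
  ∀ F : Set (Euc n), MeasurableSet F → E ⊆ F → CptIn (F \ E) Ω →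
    perK K E Ω ≤ perK K F Ω

/-- `E` is strongly `K`-outward minimizing in `Ω` with constant `δ`. -/
def StrongOutMin {n : ℕ} (K : Euc n → ℝ) (δ : ℝ) (E Ω : Set (Euc n)) : Prop :=
  ∀ F : Set (Euc n), MeasurableSet F → E ⊆ F → CptIn (F \ E) Ω →
    perK K E Ω + ENNReal.ofReal δ * volume (F \ E) ≤ perK K F Ω

end
noncomputable section
open MeasureTheory Set Filter Metric Topology
open scoped ENNReal Pointwise

/-- The truncated `K`-curvature of `G` at `x`, with truncation parameter `ε`:
`∫_{ℝⁿ∖B(x,ε)} (χ_{Gᶜ}(y) − χ_G(y)) K(x−y) dy`. -/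
def truncCurv {n : ℕ} (K : Euc n → ℝ) (G : Set (Euc n)) (x : Euc n) (ε : ℝ) : ℝ :=
  ∫ y in (Metric.ball x ε)ᶜ,
    ((Gᶜ).indicator (fun _ => (1:ℝ)) y - G.indicator (fun _ => (1:ℝ)) y) * K (x - y)

/-- `G` has compact boundary of class `C^{1,1}`: the boundary is compact, and `G` is the
sublevel set of a `C^1` function with Lipschitz gradient which is nondegenerate on the
boundary. -/
def HasCptC11Boundary {n : ℕ} (G : Set (Euc n)) : Prop :=
  IsCompact (frontier G) ∧
  ∃ φ : Euc n → ℝ, ContDiff ℝ 1 φ ∧ (∃ L : NNReal, LipschitzWith L (fderiv ℝ φ)) ∧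
    G = {x | φ x ≤ 0} ∧ frontier G = {x | φ x = 0} ∧
    ∀ x ∈ frontier G, fderiv ℝ φ x ≠ 0

/-- `H^K_A(x) ≥ c` in the viscosity sense: every set `G` with compact `C^{1,1}` boundary
with `G ⊆ A` and `x ∈ ∂G` has `K`-curvature at least `c` at `x` (the curvature being the
limit of the truncated curvatures). -/
def ViscCurvGE {n : ℕ} (K : Euc n → ℝ) (A : Set (Euc n)) (x : Euc n) (c : ℝ) : Prop :=
  ∀ G : Set (Euc n), HasCptC11Boundary G → G ⊆ A → x ∈ frontier G →
    ∀ L : ℝ, Tendsto (truncCurv K G x) (𝓝[>] (0:ℝ)) (𝓝 L) → c ≤ L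

/-- Signed distance function from `E` (positive inside). -/
def sgnDist {n : ℕ} (E : Set (Euc n)) (x : Euc n) : ℝ :=
  Metric.infDist x Eᶜ - Metric.infDist x E

/-- The Almgren–Taylor–Wang energy `Per_K(G) − (1/h)∫_G d_E`. -/
def atwEnergy {n : ℕ} (K : Euc n → ℝ) (E : Set (Euc n)) (h : ℝ) (G : Set (Euc n)) : ℝ :=
  (perKtot K G).toReal - (1/h) * ∫ x in G, sgnDist E x

/-- `T` is an ATW minimizer for `E` at step `h`: it minimizes the ATW energy among all
measurable sets (competitors with infinite energy being irrelevant). -/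
def ATWMin {n : ℕ} (K : Euc n → ℝ) (E : Set (Euc n)) (h : ℝ) (T : Set (Euc n)) : Prop :=
  MeasurableSet T ∧ perKtot K T < ⊤ ∧ IntegrableOn (sgnDist E) T ∧
  ∀ G : Set (Euc n), MeasurableSet G → perKtot K G < ⊤ → IntegrableOn (sgnDist E) G →
    atwEnergy K E h T ≤ atwEnergy K E h G

/-- The set of Lebesgue density-one points of `T`. -/
def densityPts {n : ℕ} (T : Set (Euc n)) : Set (Euc n) :=
  {x | Tendsto (fun ρ : ℝ =>
      volume (T ∩ Metric.closedBall x ρ) / volume (Metric.closedBall x ρ))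
    (𝓝[>] (0:ℝ)) (𝓝 1)}

/-- The nonlocal functional `J_K(v) = ½∬ |v(x)−v(y)| K(x−y) dx dy`. -/
def JK {n : ℕ} (K : Euc n → ℝ) (v : Euc n → ℝ) : ℝ≥0∞ :=
  (1/2 : ℝ≥0∞) * ∫⁻ x : Euc n, ∫⁻ y : Euc n,
    ENNReal.ofReal |v x - v y| * ENNReal.ofReal (K (x - y))

end

open MeasureTheory Set Filter Metric Topology
open scoped ENNReal RealInnerProductSpace

namespace HSAux

variable {n : ℕ}

/-- double set integral of a kernel -/
noncomputable def L (k : Euc n → ℝ≥0∞) (X Y : Set (Euc n)) : ℝ≥0∞ :=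
  ∫⁻ x in X, ∫⁻ y in Y, k (x - y)

/-- double full integral over a region `W` in the product -/
noncomputable def Q (k : Euc n → ℝ≥0∞) (W : Set (Euc n × Euc n)) : ℝ≥0∞ :=
  ∫⁻ x, ∫⁻ y, W.indicator 1 (x, y) * k (x - y)

lemma meas_pair {k : Euc n → ℝ≥0∞} (hk : Measurable k) (W : Set (Euc n × Euc n))
    (hW : MeasurableSet W) :
    Measurable fun q : Euc n × Euc n => W.indicator 1 q * k (q.1 - q.2) :=
  ((measurable_const.indicator hW)).mul (hk.comp (measurable_fst.sub measurable_snd))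

lemma meas_inner {k : Euc n → ℝ≥0∞} (hk : Measurable k) (S : Set (Euc n)) :
    Measurable fun x : Euc n => ∫⁻ y in S, k (x - y) :=
  Measurable.lintegral_prod_right' (f := fun q : Euc n × Euc n => k (q.1 - q.2))
    (hk.comp (measurable_fst.sub measurable_snd))

lemma meas_innerQ {k : Euc n → ℝ≥0∞} (hk : Measurable k) (W : Set (Euc n × Euc n))
    (hW : MeasurableSet W) :
    Measurable fun x : Euc n => ∫⁻ y, W.indicator 1 (x, y) * k (x - y) :=
  Measurable.lintegral_prod_right' (meas_pair hk W hW)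

lemma Q_mono (k : Euc n → ℝ≥0∞) {W W' : Set (Euc n × Euc n)} (h : W ⊆ W') :
    Q k W ≤ Q k W' := by
  refine lintegral_mono fun x => lintegral_mono fun y => ?_
  exact mul_le_mul_left (Set.indicator_le_indicator_of_subset h (fun _ => zero_le) _) _

lemma Q_union {k : Euc n → ℝ≥0∞} (hk : Measurable k) {W W' : Set (Euc n × Euc n)}
    (hW : MeasurableSet W) (hW' : MeasurableSet W') (hd : Disjoint W W') :
    Q k (W ∪ W') = Q k W + Q k W' := by
  have hpt : ∀ q : Euc n × Euc n, (W ∪ W').indicator 1 q * k (q.1 - q.2)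
      = W.indicator 1 q * k (q.1 - q.2) + W'.indicator 1 q * k (q.1 - q.2) := by
    intro q
    rw [← add_mul]
    congr 1
    by_cases h1 : q ∈ W
    · have h2 : q ∉ W' := fun h2 => (hd.ne_of_mem h1 h2) rfl
      simp [Set.indicator_apply, h1, h2]
    · by_cases h2 : q ∈ W' <;> simp [Set.indicator_apply, h1, h2]
  unfold Q
  have : ∀ x, ∫⁻ y, (W ∪ W').indicator 1 (x, y) * k (x - y)
      = (∫⁻ y, W.indicator 1 (x, y) * k (x - y)) + ∫⁻ y, W'.indicator 1 (x, y) * k (x - y) := by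
    intro x
    have m1 : Measurable fun y : Euc n => W.indicator 1 (x, y) * k (x - y) := by
      exact (meas_pair hk W hW).comp measurable_prodMk_left
    rw [← lintegral_add_left m1]
    exact lintegral_congr fun y => hpt (x, y)
  rw [lintegral_congr this]
  exact lintegral_add_left (meas_innerQ hk W hW) _

lemma refl_set {k : Euc n → ℝ≥0∞} (hke : ∀ z, k (-z) = k z)
    (x : Euc n) (S : Set (Euc n)) :
    ∫⁻ y in (fun y : Euc n => (x + x) - y) ⁻¹' S, k (x - y) = ∫⁻ y in S, k (x - y) := by
  have hemb : MeasurableEmbedding (fun y : Euc n => (x + x) - y) :=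
    (MeasurableEquiv.subLeft (x + x)).measurableEmbedding
  have h := (Measure.measurePreserving_sub_left (volume : Measure (Euc n))
      (x + x)).setLIntegral_comp_preimage_emb hemb (fun y => k (x - y)) S
  rw [← h]
  refine lintegral_congr fun y => ?_
  have h2 : x - y = -(x - ((x + x) - y)) := by abel
  rw [h2, hke]

lemma ind_to_cut {k : Euc n → ℝ≥0∞} (x : Euc n) {W : Set (Euc n × Euc n)}
    (hW : MeasurableSet W) :
    ∫⁻ y, W.indicator 1 (x, y) * k (x - y) = ∫⁻ y in {y | (x, y) ∈ W}, k (x - y) := by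
  have hset : {y : Euc n | (x, y) ∈ W} = Prod.mk x ⁻¹' W := rfl
  rw [hset, ← lintegral_indicator (measurable_prodMk_left hW)]
  refine lintegral_congr fun y => ?_
  by_cases h : (x, y) ∈ W <;> simp [Set.indicator_apply, Set.mem_preimage, h]

lemma Q_refl {k : Euc n → ℝ≥0∞} (hke : ∀ z, k (-z) = k z)
    {W W' : Set (Euc n × Euc n)} (hW : MeasurableSet W) (hW' : MeasurableSet W')
    (hcut : ∀ x, {y | (x, y) ∈ W'} = (fun y : Euc n => (x + x) - y) ⁻¹' {y | (x, y) ∈ W}) :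
    Q k W' = Q k W := by
  refine lintegral_congr fun x => ?_
  rw [ind_to_cut x hW', ind_to_cut x hW, hcut x, refl_set hke]

lemma Q_swap {k : Euc n → ℝ≥0∞} (hk : Measurable k) (hke : ∀ z, k (-z) = k z)
    {W : Set (Euc n × Euc n)} (hW : MeasurableSet W) :
    Q k W = Q k {q : Euc n × Euc n | (q.2, q.1) ∈ W} := by
  unfold Q
  rw [lintegral_lintegral_swap (meas_pair hk W hW).aemeasurable]
  refine lintegral_congr fun x => lintegral_congr fun y => ?_
  have h2 : y - x = -(x - y) := by abel
  have hmem : ({q : Euc n × Euc n | (q.2, q.1) ∈ W}).indicator 1 (x, y)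
      = W.indicator (1 : Euc n × Euc n → ℝ≥0∞) (y, x) := rfl
  rw [hmem, h2, hke]

lemma Q_cut_null {k : Euc n → ℝ≥0∞} {W : Set (Euc n × Euc n)}
    (h : ∀ x, volume {y | (x, y) ∈ W} = 0) (hW : MeasurableSet W) : Q k W = 0 := by
  have : ∀ x, ∫⁻ y, W.indicator 1 (x, y) * k (x - y) = 0 := by
    intro x
    rw [ind_to_cut x hW]
    exact setLIntegral_measure_zero _ _ (h x)
  simp only [Q, this, lintegral_zero]

lemma L_to_Q {k : Euc n → ℝ≥0∞} {X Y : Set (Euc n)}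
    (hX : MeasurableSet X) (hY : MeasurableSet Y) :
    L k X Y = Q k (X ×ˢ Y) := by
  unfold L Q
  rw [← lintegral_indicator hX]
  refine lintegral_congr fun x => ?_
  by_cases hx : x ∈ X
  · rw [Set.indicator_of_mem hx, ← lintegral_indicator hY]
    refine lintegral_congr fun y => ?_
    by_cases hy : y ∈ Y <;> simp [Set.indicator_apply, Set.mem_prod, hx, hy]
  · rw [Set.indicator_of_notMem hx]
    have h0 : ∀ y : Euc n, (X ×ˢ Y).indicator (1 : Euc n × Euc n → ℝ≥0∞) (x, y) = 0 :=
      fun y => Set.indicator_of_notMem (fun h => hx h.1) _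
    symm
    simp [h0]

lemma L_symm {k : Euc n → ℝ≥0∞} (hk : Measurable k) (hke : ∀ z, k (-z) = k z)
    {X Y : Set (Euc n)} (hX : MeasurableSet X) (hY : MeasurableSet Y) :
    L k X Y = L k Y X := by
  rw [L_to_Q hX hY, L_to_Q hY hX, Q_swap hk hke (hX.prod hY)]
  congr 1
  ext q
  simp only [Set.mem_setOf_eq, Set.mem_prod]
  tauto

lemma L_add_right {k : Euc n → ℝ≥0∞} (hk : Measurable k) (X : Set (Euc n))
    {Y Z : Set (Euc n)} (hZ : MeasurableSet Z) (hd : Disjoint Y Z) :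
    L k X (Y ∪ Z) = L k X Y + L k X Z := by
  unfold L
  have h : ∀ x : Euc n, ∫⁻ y in Y ∪ Z, k (x - y)
      = (∫⁻ y in Y, k (x - y)) + ∫⁻ y in Z, k (x - y) :=
    fun x => lintegral_union hZ hd
  rw [lintegral_congr h]
  exact lintegral_add_left (meas_inner hk Y) _

lemma L_add_left {k : Euc n → ℝ≥0∞} {X Y : Set (Euc n)} (Z : Set (Euc n))
    (hY : MeasurableSet Y) (hd : Disjoint X Y) :
    L k (X ∪ Y) Z = L k X Z + L k Y Z :=
  lintegral_union hY hd

lemma L_kernel_mono {k k' : Euc n → ℝ≥0∞} (h : ∀ z, k z ≤ k' z) (X Y : Set (Euc n)) :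
    L k X Y ≤ L k' X Y :=
  lintegral_mono fun x => lintegral_mono fun y => h _

lemma L_fin {k : Euc n → ℝ≥0∞} (hk : Measurable k) (hfin : (∫⁻ z, k z) ≠ ⊤)
    {A : Set (Euc n)} (hAv : volume A ≠ ⊤) : L k A A ≠ ⊤ := by
  have hle : L k A A ≤ (∫⁻ z, k z) * volume A := by
    have h1 : L k A A ≤ ∫⁻ x in A, ∫⁻ y, k (x - y) :=
      lintegral_mono fun x => lintegral_mono' Measure.restrict_le_self le_rfl
    have h2 : ∀ x : Euc n, ∫⁻ y, k (x - y) = ∫⁻ z, k z := fun x =>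
      (Measure.measurePreserving_sub_left (volume : Measure (Euc n)) x).lintegral_comp hk
    calc L k A A ≤ ∫⁻ x in A, ∫⁻ y, k (x - y) := h1
      _ = ∫⁻ _ in A, ∫⁻ z, k z := lintegral_congr h2
      _ = (∫⁻ z, k z) * volume A := setLIntegral_const A _
  exact ne_top_of_le_ne_top (ENNReal.mul_ne_top hfin hAv) hle

lemma L_sup {km : ℕ → Euc n → ℝ≥0∞} {k : Euc n → ℝ≥0∞}
    (hm : ∀ m, Measurable (km m)) (hmono : ∀ z, Monotone fun m => km m z)
    (hsup : ∀ z, (⨆ m, km m z) = k z) (X Y : Set (Euc n)) :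
    (⨆ m, L (km m) X Y) = L k X Y := by
  unfold L
  have hin : ∀ x : Euc n, ∫⁻ y in Y, k (x - y) = ⨆ m, ∫⁻ y in Y, km m (x - y) := by
    intro x
    have h := lintegral_iSup (μ := volume.restrict Y) (f := fun m (y : Euc n) => km m (x - y))
      (fun m => by exact (hm m).comp (measurable_const.sub measurable_id))
      (fun i j hij y => hmono _ hij)
    rw [← h]
    exact lintegral_congr fun y => (hsup _).symm
  refine Eq.symm ?_
  rw [lintegral_congr hin]
  exact lintegral_iSup (fun m => meas_inner (hm m) Y)
    (fun i j hij x => lintegral_mono fun y => hmono _ hij)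

lemma hyperplane_null (ν : Euc n) (hν : ‖ν‖ = 1) (c : ℝ) :
    volume {y : Euc n | ⟪y, ν⟫ = c} = 0 := by
  have hνν : ⟪ν, ν⟫ = 1 := by
    rw [real_inner_self_eq_norm_mul_norm, hν, one_mul]
  let φ : Euc n →ₗ[ℝ] ℝ :=
    { toFun := fun y => ⟪y, ν⟫
      map_add' := fun a b => inner_add_left a b ν
      map_smul' := fun r a => real_inner_smul_left a ν r }
  have hne : LinearMap.ker φ ≠ ⊤ := by
    intro h
    have hν0 : φ ν = 0 := LinearMap.mem_ker.mp (h ▸ Submodule.mem_top)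
    have : (1 : ℝ) = 0 := by rwa [show φ ν = ⟪ν, ν⟫ from rfl, hνν] at hν0
    norm_num at this
  have h0 : volume ((LinearMap.ker φ : Submodule ℝ (Euc n)) : Set (Euc n)) = 0 :=
    Measure.addHaar_submodule _ _ hne
  have hset : {y : Euc n | ⟪y, ν⟫ = c}
      = (fun y => -(c • ν) + y) ⁻¹' ((LinearMap.ker φ : Submodule ℝ (Euc n)) : Set (Euc n)) := by
    ext y
    simp only [Set.mem_setOf_eq, Set.mem_preimage, SetLike.mem_coe, LinearMap.mem_ker]
    have : φ (-(c • ν) + y) = -(c * ⟪ν, ν⟫) + ⟪y, ν⟫ := by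
      show ⟪-(c • ν) + y, ν⟫ = _
      rw [inner_add_left, inner_neg_left, real_inner_smul_left]
    rw [this, hνν]
    constructor <;> intro h <;> linarith
  rw [hset, measure_preimage_add]
  exact h0

lemma singleton_null (ν : Euc n) (hν : ‖ν‖ = 1) (x : Euc n) :
    volume ({x} : Set (Euc n)) = 0 := by
  refine measure_mono_null ?_ (hyperplane_null ν hν ⟪x, ν⟫)
  intro y hy
  rw [Set.mem_singleton_iff] at hy
  subst hy
  exact rfl

end HSAux

namespace HSAux
variable {n : ℕ}

lemma core {k : Euc n → ℝ≥0∞} (hk : Measurable k) (hke : ∀ z, k (-z) = k z)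
    (ν : Euc n) (hν : ‖ν‖ = 1) {A : Set (Euc n)} (hA : MeasurableSet A)
    (hAH : ∀ x ∈ A, ⟪x, ν⟫ < 0) :
    L k A A + L k A {y : Euc n | 0 ≤ ⟪y, ν⟫} ≤ L k A {y : Euc n | ⟪y, ν⟫ < 0} := by
  have hpm : Measurable fun y : Euc n => ⟪y, ν⟫ :=
    (continuous_id.inner continuous_const).measurable
  have hpm1 : Measurable fun q : Euc n × Euc n => ⟪q.1, ν⟫ := hpm.comp measurable_fst
  have hpm2 : Measurable fun q : Euc n × Euc n => ⟪q.2, ν⟫ := hpm.comp measurable_snd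
  have hH : MeasurableSet {y : Euc n | 0 ≤ ⟪y, ν⟫} := measurableSet_le measurable_const hpm
  have hHc : MeasurableSet {y : Euc n | ⟪y, ν⟫ < 0} := measurableSet_lt hpm measurable_const
  set HH := {y : Euc n | 0 ≤ ⟪y, ν⟫} with hHH_def
  set Dlt := (A ×ˢ A) ∩ {q : Euc n × Euc n | ⟪q.2, ν⟫ < ⟪q.1, ν⟫} with hDlt_def
  set Dgt := (A ×ˢ A) ∩ {q : Euc n × Euc n | ⟪q.1, ν⟫ < ⟪q.2, ν⟫} with hDgt_def
  set Deq := (A ×ˢ A) ∩ {q : Euc n × Euc n | ⟪q.1, ν⟫ = ⟪q.2, ν⟫} with hDeq_def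
  set SL := (A ×ˢ (univ : Set (Euc n))) ∩
      {q : Euc n × Euc n | ⟪q.1, ν⟫ < ⟪q.2, ν⟫ ∧ ⟪q.2, ν⟫ < 0} with hSL_def
  set SU := (A ×ˢ (univ : Set (Euc n))) ∩
      {q : Euc n × Euc n | 2 * ⟪q.1, ν⟫ < ⟪q.2, ν⟫ ∧ ⟪q.2, ν⟫ < ⟪q.1, ν⟫} with hSU_def
  set Strip := (A ×ˢ (univ : Set (Euc n))) ∩
      {q : Euc n × Euc n | 2 * ⟪q.1, ν⟫ < ⟪q.2, ν⟫ ∧ ⟪q.2, ν⟫ < 0} with hStrip_def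
  set Far := (A ×ˢ (univ : Set (Euc n))) ∩
      {q : Euc n × Euc n | ⟪q.2, ν⟫ ≤ 2 * ⟪q.1, ν⟫} with hFar_def
  set rfl2 : Euc n × Euc n → Euc n × Euc n := fun q => (q.1, q.1 + q.1 - q.2) with hrefl_def
  have hreflm : Measurable rfl2 :=
    measurable_fst.prodMk ((measurable_fst.add measurable_fst).sub measurable_snd)
  have hw : ∀ a b : Euc n, ⟪a + a - b, ν⟫ = 2 * ⟪a, ν⟫ - ⟪b, ν⟫ := by
    intro a b; rw [inner_sub_left, inner_add_left]; ring
  have hDlt : MeasurableSet Dlt := (hA.prod hA).inter (measurableSet_lt hpm2 hpm1)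
  have hDgt : MeasurableSet Dgt := (hA.prod hA).inter (measurableSet_lt hpm1 hpm2)
  have hDeq : MeasurableSet Deq := (hA.prod hA).inter (measurableSet_eq_fun hpm1 hpm2)
  have hSL : MeasurableSet SL := (hA.prod MeasurableSet.univ).inter
      ((measurableSet_lt hpm1 hpm2).inter (measurableSet_lt hpm2 measurable_const))
  have hSU : MeasurableSet SU := (hA.prod MeasurableSet.univ).inter
      ((measurableSet_lt (measurable_const.mul hpm1) hpm2).inter (measurableSet_lt hpm2 hpm1))
  have hStrip : MeasurableSet Strip := (hA.prod MeasurableSet.univ).inter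
      ((measurableSet_lt (measurable_const.mul hpm1) hpm2).inter
        (measurableSet_lt hpm2 measurable_const))
  have hFarM : MeasurableSet Far := (hA.prod MeasurableSet.univ).inter
      (measurableSet_le hpm2 (measurable_const.mul hpm1))
  have hReflM : MeasurableSet (rfl2 ⁻¹' Dgt) := hreflm hDgt
  have hReflHM : MeasurableSet (rfl2 ⁻¹' (A ×ˢ HH)) := hreflm (hA.prod hH)
  -- step 1 : L A A = Q Dlt + Q Dgt
  have hd2 : Disjoint Dlt Dgt := by
    rw [Set.disjoint_left]
    rintro q ⟨_, h1⟩ ⟨_, h2⟩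
    simp only [Set.mem_setOf_eq] at h1 h2
    linarith
  have hd1 : Disjoint (Dlt ∪ Dgt) Deq := by
    rw [Set.disjoint_left]
    rintro q (⟨_, h1⟩ | ⟨_, h1⟩) ⟨_, h2⟩ <;>
      simp only [Set.mem_setOf_eq] at h1 h2 <;> linarith
  have hsplit : A ×ˢ A = (Dlt ∪ Dgt) ∪ Deq := by
    ext q
    simp only [hDlt_def, hDgt_def, hDeq_def, Set.mem_union, Set.mem_inter_iff, Set.mem_setOf_eq]
    constructor
    · intro h
      rcases lt_trichotomy (⟪q.2, ν⟫) (⟪q.1, ν⟫) with h' | h' | h'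
      · exact Or.inl (Or.inl ⟨h, h'⟩)
      · exact Or.inr ⟨h, h'.symm⟩
      · exact Or.inl (Or.inr ⟨h, h'⟩)
    · rintro ((⟨h, _⟩ | ⟨h, _⟩) | ⟨h, _⟩) <;> exact h
  have hQeq : Q k Deq = 0 := by
    refine Q_cut_null (fun x => ?_) hDeq
    refine measure_mono_null (fun y hy => ?_) (hyperplane_null ν hν ⟪x, ν⟫)
    exact hy.2.symm
  have hLAA : L k A A = Q k Dlt + Q k Dgt := by
    rw [L_to_Q hA hA, hsplit, Q_union hk (hDlt.union hDgt) hDeq hd1,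
      Q_union hk hDlt hDgt hd2, hQeq, add_zero]
  -- step 2 : Q Dlt = Q Dgt
  have hQswap : Q k Dlt = Q k Dgt := by
    rw [Q_swap hk hke hDlt]
    congr 1
    ext q
    simp only [Set.mem_setOf_eq, hDlt_def, hDgt_def, Set.mem_inter_iff, Set.mem_prod]
    tauto
  -- step 3 : Q (rfl2 ⁻¹' Dgt) = Q Dgt
  have hQrefl : Q k (rfl2 ⁻¹' Dgt) = Q k Dgt :=
    Q_refl hke hDgt hReflM (fun x => rfl)
  -- step 4 : inclusions
  have hsubSU : rfl2 ⁻¹' Dgt ⊆ SU := by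
    rintro ⟨a, b⟩ ⟨⟨ha, haab⟩, hlt⟩
    simp only [Set.mem_setOf_eq] at hlt
    have h2 : ⟪a + a - b, ν⟫ < 0 := hAH _ haab
    rw [hw a b] at hlt h2
    exact ⟨⟨ha, trivial⟩, by constructor <;> linarith⟩
  have hsubSL : Dgt ⊆ SL := by
    rintro ⟨a, b⟩ ⟨⟨ha, hb⟩, hlt⟩
    simp only [Set.mem_setOf_eq] at hlt
    exact ⟨⟨ha, trivial⟩, hlt, hAH _ hb⟩
  have hdSLSU : Disjoint SL SU := by
    rw [Set.disjoint_left]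
    rintro q ⟨_, h1, _⟩ ⟨_, _, h2⟩
    linarith
  have hsubStrip : SL ∪ SU ⊆ Strip := by
    rintro ⟨a, b⟩ (⟨⟨ha, -⟩, h1, h2⟩ | ⟨⟨ha, -⟩, h1, h2⟩) <;>
      refine ⟨⟨ha, trivial⟩, ?_, ?_⟩ <;> have h3 := hAH a ha <;> linarith
  -- step 6 : far
  have hFarEq : rfl2 ⁻¹' (A ×ˢ HH) = Far := by
    ext ⟨a, b⟩
    simp only [Set.mem_preimage, hrefl_def, Set.mem_prod, hHH_def, Set.mem_setOf_eq,
      hFar_def, Set.mem_inter_iff, Set.mem_univ, and_true]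
    rw [hw a b]
    constructor
    · rintro ⟨ha, h⟩; exact ⟨ha, by linarith⟩
    · rintro ⟨ha, h⟩; exact ⟨ha, by linarith⟩
  have hQfar : Q k (A ×ˢ HH) = Q k Far := by
    rw [← hFarEq]
    exact (Q_refl hke (hA.prod hH) hReflHM (fun x => rfl)).symm
  -- step 7 : Strip ∪ Far = A ×ˢ Hc
  have hd3 : Disjoint Strip Far := by
    rw [Set.disjoint_left]
    rintro q ⟨_, h1, _⟩ ⟨_, h2⟩
    simp only [Set.mem_setOf_eq] at h1 h2
    linarith
  have hunion2 : Strip ∪ Far = A ×ˢ {y : Euc n | ⟪y, ν⟫ < 0} := by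
    ext ⟨a, b⟩
    simp only [hStrip_def, hFar_def, Set.mem_union, Set.mem_inter_iff, Set.mem_prod,
      Set.mem_setOf_eq, Set.mem_univ, and_true]
    constructor
    · rintro (⟨ha, h1, h2⟩ | ⟨ha, h1⟩)
      · exact ⟨ha, h2⟩
      · have h3 := hAH a ha
        exact ⟨ha, by linarith⟩
    · rintro ⟨ha, hb⟩
      by_cases h : 2 * ⟪a, ν⟫ < ⟪b, ν⟫
      · exact Or.inl ⟨ha, h, hb⟩
      · exact Or.inr ⟨ha, le_of_not_gt h⟩
  -- final chain
  calc L k A A + L k A HH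
      = (Q k Dlt + Q k Dgt) + Q k (A ×ˢ HH) := by rw [hLAA, L_to_Q hA hH]
    _ = (Q k Dgt + Q k (rfl2 ⁻¹' Dgt)) + Q k Far := by rw [hQswap, hQrefl, hQfar]
    _ ≤ (Q k SL + Q k SU) + Q k Far :=
        add_le_add (add_le_add (Q_mono _ hsubSL) (Q_mono _ hsubSU)) le_rfl
    _ = Q k (SL ∪ SU) + Q k Far := by rw [Q_union hk hSL hSU hdSLSU]
    _ ≤ Q k Strip + Q k Far := add_le_add (Q_mono _ hsubStrip) le_rfl
    _ = Q k (Strip ∪ Far) := (Q_union hk hStrip hFarM hd3).symm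
    _ = Q k (A ×ˢ {y : Euc n | ⟪y, ν⟫ < 0}) := by rw [hunion2]
    _ = L k A {y : Euc n | ⟪y, ν⟫ < 0} := (L_to_Q hA hHc).symm

end HSAux

namespace HSAux
variable {n : ℕ}

-- the kernel as an `ℝ≥0∞`-valued function, set to `0` at the origin
open Classical in
noncomputable def k0 (K : Euc n → ℝ) : Euc n → ℝ≥0∞ :=
  fun z => if z = 0 then 0 else ENNReal.ofReal (K z)

/-- truncated kernels -/
noncomputable def ktr (K : Euc n → ℝ) (m : ℕ) : Euc n → ℝ≥0∞ :=
  fun z => if (1 / (m + 1) : ℝ) ≤ ‖z‖ then k0 K z else 0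

lemma k0_meas {K : Euc n → ℝ} (hKm : Measurable K) : Measurable (k0 K) := by
  unfold k0
  exact Measurable.ite (MeasurableSet.singleton 0) measurable_const
    (ENNReal.measurable_ofReal.comp hKm)

lemma k0_even {K : Euc n → ℝ} (hKe : ∀ x : Euc n, x ≠ 0 → K (-x) = K x) :
    ∀ z, k0 K (-z) = k0 K z := by
  intro z
  by_cases hz : z = 0
  · subst hz; simp [k0]
  · have hz' : -z ≠ 0 := fun h => hz (by simpa using congrArg Neg.neg h)
    simp only [k0, if_neg hz, if_neg hz', hKe z hz]

lemma ktr_meas {K : Euc n → ℝ} (hKm : Measurable K) (m : ℕ) : Measurable (ktr K m) := by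
  unfold ktr
  exact Measurable.ite (measurableSet_le measurable_const measurable_norm)
    (k0_meas hKm) measurable_const

lemma ktr_even {K : Euc n → ℝ} (hKe : ∀ x : Euc n, x ≠ 0 → K (-x) = K x) (m : ℕ) :
    ∀ z, ktr K m (-z) = ktr K m z := by
  intro z
  simp only [ktr, norm_neg, k0_even hKe z]

lemma ktr_mono (K : Euc n → ℝ) (z : Euc n) : Monotone fun m => ktr K m z := by
  intro i j hij
  simp only [ktr]
  by_cases hi : (1 / (i + 1) : ℝ) ≤ ‖z‖
  · have hj : (1 / (j + 1) : ℝ) ≤ ‖z‖ := by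
      refine le_trans (one_div_le_one_div_of_le (by positivity) ?_) hi
      have hij' : (i : ℝ) ≤ (j : ℝ) := by exact_mod_cast hij
      linarith
    rw [if_pos hi, if_pos hj]
  · rw [if_neg hi]
    exact zero_le
lemma ktr_le (K : Euc n → ℝ) (m : ℕ) (z : Euc n) : ktr K m z ≤ k0 K z := by
  simp only [ktr]
  by_cases h : (1 / (m + 1) : ℝ) ≤ ‖z‖
  · rw [if_pos h]
  · rw [if_neg h]
    exact zero_le

lemma ktr_sup (K : Euc n → ℝ) (z : Euc n) : (⨆ m, ktr K m z) = k0 K z := by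
  by_cases hz : z = 0
  · subst hz
    have h0 : ∀ m, ktr K m 0 = 0 := by
      intro m
      have : ¬ ((1 / (m + 1) : ℝ) ≤ ‖(0 : Euc n)‖) := by
        simp only [norm_zero, not_le]
        positivity
      simp only [ktr, if_neg this]
    simp [h0, k0]
  · refine le_antisymm (iSup_le fun m => ktr_le K m z) ?_
    have hz' : (0 : ℝ) < ‖z‖ := norm_pos_iff.mpr hz
    obtain ⟨m, hm⟩ := exists_nat_one_div_lt hz'
    refine le_iSup_of_le m ?_
    simp only [ktr, if_pos hm.le]
    exact le_rfl

lemma ktr_int_fin {K : Euc n → ℝ} (hK : KernelOK K) (m : ℕ) :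
    (∫⁻ z, ktr K m z) ≠ ⊤ := by
  obtain ⟨hKm, hKpos, hKe, hKint⟩ := hK
  set c : ℝ := min 1 (1 / (m + 1)) with hc_def
  have hc : 0 < c := by
    apply lt_min one_pos
    positivity
  have hbd : ∀ z, ktr K m z ≤ ENNReal.ofReal c⁻¹ * ENNReal.ofReal (min 1 ‖z‖ * K z) := by
    intro z
    by_cases hcond : (1 / (m + 1) : ℝ) ≤ ‖z‖
    · have hzpos : (0 : ℝ) < ‖z‖ := lt_of_lt_of_le (by positivity) hcond
      have hz : z ≠ 0 := fun h => by simp [h] at hzpos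
      have hKz : 0 ≤ K z := hKpos z hz
      have hcmin : c ≤ min 1 ‖z‖ := min_le_min le_rfl hcond
      have h1 : ktr K m z = ENNReal.ofReal (K z) := by
        simp only [ktr, if_pos hcond, k0, if_neg hz]
      rw [h1, ENNReal.ofReal_inv_of_pos hc]
      have h2 : ENNReal.ofReal (c * K z) ≤ ENNReal.ofReal (min 1 ‖z‖ * K z) :=
        ENNReal.ofReal_le_ofReal (mul_le_mul_of_nonneg_right hcmin hKz)
      calc ENNReal.ofReal (K z)
          = (ENNReal.ofReal c)⁻¹ * (ENNReal.ofReal c * ENNReal.ofReal (K z)) := by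
            rw [← mul_assoc, ENNReal.inv_mul_cancel (by positivity) ENNReal.ofReal_ne_top,
              one_mul]
        _ = (ENNReal.ofReal c)⁻¹ * ENNReal.ofReal (c * K z) := by
            rw [ENNReal.ofReal_mul hc.le]
        _ ≤ (ENNReal.ofReal c)⁻¹ * ENNReal.ofReal (min 1 ‖z‖ * K z) := by
            exact mul_le_mul_right h2 _
    · simp only [ktr, if_neg hcond]
      exact zero_le
  have hle : (∫⁻ z, ktr K m z)
      ≤ ∫⁻ z : Euc n, ENNReal.ofReal c⁻¹ * ENNReal.ofReal (min 1 ‖z‖ * K z) :=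
    lintegral_mono hbd
  rw [lintegral_const_mul' _ _ (by simp : (ENNReal.ofReal c⁻¹) ≠ ⊤)] at hle
  exact ne_top_of_le_ne_top (ENNReal.mul_ne_top (by simp) hKint.ne) hle

/-- the key inequality -/
lemma key {K : Euc n → ℝ} (hK : KernelOK K) (ν : Euc n) (hν : ‖ν‖ = 1)
    {A : Set (Euc n)} (hA : MeasurableSet A) (hAv : volume A ≠ ⊤)
    (hAH : ∀ x ∈ A, ⟪x, ν⟫ < 0) :
    L (k0 K) A {y : Euc n | 0 ≤ ⟪y, ν⟫} ≤ L (k0 K) A ({y : Euc n | ⟪y, ν⟫ < 0} \ A) := by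
  obtain ⟨hKm, hKpos, hKe, hKint⟩ := hK
  have hpm : Measurable fun y : Euc n => ⟪y, ν⟫ :=
    (continuous_id.inner continuous_const).measurable
  have hHc : MeasurableSet {y : Euc n | ⟪y, ν⟫ < 0} := measurableSet_lt hpm measurable_const
  have hAsub : A ⊆ {y : Euc n | ⟪y, ν⟫ < 0} := fun x hx => hAH x hx
  have hsplitHc : {y : Euc n | ⟪y, ν⟫ < 0} = A ∪ ({y : Euc n | ⟪y, ν⟫ < 0} \ A) :=
    (Set.union_diff_cancel hAsub).symm
  have hstep : ∀ m : ℕ, L (ktr K m) A {y : Euc n | 0 ≤ ⟪y, ν⟫}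
      ≤ L (ktr K m) A ({y : Euc n | ⟪y, ν⟫ < 0} \ A) := by
    intro m
    have hcore := core (ktr_meas hKm m) (ktr_even hKe m) ν hν hA hAH
    have hsplit : L (ktr K m) A {y : Euc n | ⟪y, ν⟫ < 0}
        = L (ktr K m) A A + L (ktr K m) A ({y : Euc n | ⟪y, ν⟫ < 0} \ A) := by
      conv_lhs => rw [hsplitHc]
      exact L_add_right (ktr_meas hKm m) A (hHc.diff hA) disjoint_sdiff_right
    rw [hsplit] at hcore
    exact (ENNReal.add_le_add_iff_left
      (L_fin (ktr_meas hKm m) (ktr_int_fin ⟨hKm, hKpos, hKe, hKint⟩ m) hAv)).mp hcore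
  rw [← L_sup (ktr_meas hKm) (ktr_mono K) (ktr_sup K) A {y : Euc n | 0 ≤ ⟪y, ν⟫}]
  exact iSup_le fun m => (hstep m).trans (L_kernel_mono (ktr_le K m) _ _)

end HSAux


/-- half-spaces are `K`-outward minimizing in every ball. -/
theorem halfspace_outMin {n : ℕ} (K : Euc n → ℝ) (hK : KernelOK K)
    (ν : Euc n) (hν : ‖ν‖ = 1) (R : ℝ) (hR : 0 < R) :
    OutMin K {x : Euc n | 0 ≤ ⟪x, ν⟫} (Metric.ball (0 : Euc n) R) := by
  intro F hF hHF hcpt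
  obtain ⟨hKm, hKpos, hKe, hKint⟩ := hK
  set Ω : Set (Euc n) := Metric.ball (0 : Euc n) R with hΩ_def
  set H : Set (Euc n) := {x : Euc n | 0 ≤ ⟪x, ν⟫} with hH_def
  set A : Set (Euc n) := F \ H with hA_def
  have hpm : Measurable fun y : Euc n => ⟪y, ν⟫ :=
    (continuous_id.inner continuous_const).measurable
  have hHmeas : MeasurableSet H := measurableSet_le measurable_const hpm
  have hΩmeas : MeasurableSet Ω := measurableSet_ball
  have hAmeas : MeasurableSet A := hF.diff hHmeas
  have hAΩ : A ⊆ Ω := subset_closure.trans hcpt.2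
  have hAv : volume A ≠ ⊤ :=
    ((measure_mono subset_closure).trans_lt hcpt.1.measure_lt_top).ne
  have hAH : ∀ x ∈ A, ⟪x, ν⟫ < 0 := fun x hx => not_le.mp hx.2
  have hAF : A ⊆ F := fun x hx => hx.1
  have hk0m : Measurable (HSAux.k0 K) := HSAux.k0_meas hKm
  have hk0e : ∀ z : Euc n, HSAux.k0 K (-z) = HSAux.k0 K z := HSAux.k0_even hKe
  -- replace `ENNReal.ofReal ∘ K` by `HSAux.k0 K` in all the integrals
  have hconv : ∀ X Y : Set (Euc n),
      (∫⁻ x in X, ∫⁻ y in Y, ENNReal.ofReal (K (x - y))) = HSAux.L (HSAux.k0 K) X Y := by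
    intro X Y
    refine lintegral_congr fun x => ?_
    refine lintegral_congr_ae (ae_restrict_of_ae ?_)
    rw [MeasureTheory.ae_iff]
    refine measure_mono_null (fun y hy => ?_) (HSAux.singleton_null ν hν x)
    by_contra hxy
    apply hy
    have hne : x - y ≠ 0 := sub_ne_zero.mpr fun h => hxy (by rw [h]; rfl)
    simp only [HSAux.k0, if_neg hne]
  -- set identities
  have e1 : Ω \ H = (Ω \ F) ∪ A := by
    ext x
    constructor
    · rintro ⟨hxΩ, hxH⟩
      by_cases hxF : x ∈ F
      · exact Or.inr ⟨hxF, hxH⟩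
      · exact Or.inl ⟨hxΩ, hxF⟩
    · rintro (⟨hxΩ, hxF⟩ | hxA)
      · exact ⟨hxΩ, fun hxH => hxF (hHF hxH)⟩
      · exact ⟨hAΩ hxA, hxA.2⟩
  have d1 : Disjoint (Ω \ F) A := by
    rw [Set.disjoint_left]
    rintro x ⟨-, hxF⟩ hxA
    exact hxF (hAF hxA)
  have e2 : F = H ∪ A := by
    rw [hA_def]
    exact (Set.union_diff_cancel hHF).symm
  have d2 : Disjoint H A := by
    rw [Set.disjoint_left]
    rintro x hxH hxA
    exact hxA.2 hxH
  have e3 : F ∩ Ω = (H ∩ Ω) ∪ A := by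
    conv_lhs => rw [e2]
    rw [Set.union_inter_distrib_right, Set.inter_eq_left.mpr hAΩ]
  have d3 : Disjoint (H ∩ Ω) A := d2.mono_left Set.inter_subset_left
  have e4 : (Ω ∪ F)ᶜ = (Ω ∪ H)ᶜ := by
    have : Ω ∪ F = Ω ∪ H := by
      ext x
      constructor
      · rintro (hxΩ | hxF)
        · exact Or.inl hxΩ
        · by_cases hxH : x ∈ H
          · exact Or.inr hxH
          · exact Or.inl (hAΩ ⟨hxF, hxH⟩)
      · rintro (hxΩ | hxH)
        · exact Or.inl hxΩ
        · exact Or.inr (hHF hxH)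
    rw [this]
  have hmemH : ∀ x : Euc n, x ∈ H ↔ 0 ≤ ⟪x, ν⟫ := fun x => Iff.rfl
  have e5 : {y : Euc n | ⟪y, ν⟫ < 0} \ A = (Ω \ F) ∪ (Ω ∪ H)ᶜ := by
    ext x
    constructor
    · rintro ⟨hxlt, hxA⟩
      have hxlt' : ⟪x, ν⟫ < 0 := hxlt
      have hxH : x ∉ H := fun h => absurd hxlt' (not_lt.mpr ((hmemH x).mp h))
      by_cases hxΩ : x ∈ Ω
      · refine Or.inl ⟨hxΩ, fun hxF => hxA ⟨hxF, hxH⟩⟩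
      · exact Or.inr (fun h => h.elim hxΩ hxH)
    · rintro (⟨hxΩ, hxF⟩ | hx)
      · have hxH : x ∉ H := fun h => hxF (hHF h)
        have hxlt : ⟪x, ν⟫ < 0 := not_le.mp (fun h => hxH ((hmemH x).mpr h))
        exact ⟨hxlt, fun hxA => hxF (hAF hxA)⟩
      · have hxΩ : x ∉ Ω := fun h => hx (Or.inl h)
        have hxH : x ∉ H := fun h => hx (Or.inr h)
        have hxlt : ⟪x, ν⟫ < 0 := not_le.mp (fun h => hxH ((hmemH x).mpr h))
        exact ⟨hxlt, fun hxA => hxΩ (hAΩ hxA)⟩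
  have d5 : Disjoint (Ω \ F) (Ω ∪ H)ᶜ := by
    rw [Set.disjoint_left]
    rintro x ⟨hxΩ, -⟩ hx
    exact hx (Or.inl hxΩ)
  -- the key inequality
  have hkey := HSAux.key ⟨hKm, hKpos, hKe, hKint⟩ ν hν hAmeas hAv hAH
  have hkey2 : HSAux.L (HSAux.k0 K) A H
      ≤ HSAux.L (HSAux.k0 K) A (Ω \ F) + HSAux.L (HSAux.k0 K) A (Ω ∪ H)ᶜ := by
    rw [e5, HSAux.L_add_right hk0m A (hΩmeas.union hHmeas).compl d5] at hkey
    exact hkey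
  have hsym : HSAux.L (HSAux.k0 K) H A = HSAux.L (HSAux.k0 K) A H :=
    HSAux.L_symm hk0m hk0e hHmeas hAmeas
  -- assemble
  have rhs1 : HSAux.L (HSAux.k0 K) F (Ω \ F)
      = HSAux.L (HSAux.k0 K) H (Ω \ F) + HSAux.L (HSAux.k0 K) A (Ω \ F) := by
    have h := HSAux.L_add_left (k := HSAux.k0 K) (X := H) (Y := A) (Ω \ F) hAmeas d2
    rw [← e2] at h
    exact h
  simp only [perK]
  rw [hconv H (Ω \ H), hconv (H ∩ Ω) (Ω ∪ H)ᶜ, hconv F (Ω \ F), hconv (F ∩ Ω) (Ω ∪ F)ᶜ]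
  rw [e1, HSAux.L_add_right hk0m H hAmeas d1, e4, e3, HSAux.L_add_left _ hAmeas d3, rhs1]
  calc (HSAux.L (HSAux.k0 K) H (Ω \ F) + HSAux.L (HSAux.k0 K) H A)
        + (HSAux.L (HSAux.k0 K) (H ∩ Ω) (Ω ∪ H)ᶜ)
      = (HSAux.L (HSAux.k0 K) H (Ω \ F) + HSAux.L (HSAux.k0 K) (H ∩ Ω) (Ω ∪ H)ᶜ)
        + HSAux.L (HSAux.k0 K) A H := by rw [hsym]; ring
    _ ≤ (HSAux.L (HSAux.k0 K) H (Ω \ F) + HSAux.L (HSAux.k0 K) (H ∩ Ω) (Ω ∪ H)ᶜ)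
        + (HSAux.L (HSAux.k0 K) A (Ω \ F) + HSAux.L (HSAux.k0 K) A (Ω ∪ H)ᶜ) :=
        add_le_add_right hkey2 _
    _ = (HSAux.L (HSAux.k0 K) H (Ω \ F) + HSAux.L (HSAux.k0 K) A (Ω \ F))
        + (HSAux.L (HSAux.k0 K) (H ∩ Ω) (Ω ∪ H)ᶜ + HSAux.L (HSAux.k0 K) A (Ω ∪ H)ᶜ) := by
        ring
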